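/- For every nonnegative integer k and positive integer N, the reverse Bessel polynomials satisfy p_{k+N}(x) = \sum_{i=N}^{2N-1} a_{i-N}(N,x) \sum_{l=0}^{k} \binom{k}{l} 2^l (i/2 + l - 1)_l p_{k-l}(x), where (y)_l = y(y-1)\cdots(y-l+1) is the falling factorial and the a_j(N,x) are the coefficients satisfying a_0(N,x) = x^N, a_{N-1}(N,x) = (2N-3)!! x, and the recurrence a_{i-N}(N+1,x) = (i-1)a_{i-N-1}(N,x) + x a_{i-N}(N,x) for N+1 \le i \le 2N-1, with a_0(N+1,x) = x a_0(N,x) and a_N(N+1,x) = (2N-1)a_{N-1}(N,x). -/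

import Mathlib

open Finset Nat

/-- The reverse Bessel polynomial `p n`. -/
noncomputable def pB (n : ℕ) (x : ℝ) : ℝ :=
  if n = 0 then 1 else
    ∑ k ∈ Finset.Icc 1 n,
      ((2 * n - k - 1).factorial : ℝ) / (2 ^ (n - k) * (k - 1).factorial * (n - k).factorial) * x ^ k

open Polynomial
noncomputable def Rr (a : ℝ) (l : ℕ) : ℝ := (ascPochhammer ℝ l).eval a

lemma Rr_zero (a : ℝ) : Rr a 0 = 1 := by simp [Rr]

lemma Rr_succ (a : ℝ) (l : ℕ) : Rr a (l + 1) = Rr a l * (a + l) := by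
  simp [Rr, ascPochhammer_succ_eval]

lemma Rr_succ' (a : ℝ) (l : ℕ) : Rr a (l + 1) = a * Rr (a + 1) l := by
  unfold Rr
  rw [ascPochhammer_succ_left, X_mul, eval_mul_X, eval_comp]
  simp [mul_comm]

lemma desc_eq_Rr (a : ℝ) (l : ℕ) : (descPochhammer ℝ l).eval (a + l - 1) = Rr a l := by
  rw [descPochhammer_eval_eq_ascPochhammer]
  unfold Rr
  congr 1
  ring

lemma Rr_one (j : ℕ) : Rr 1 j = (j ! : ℝ) := by
  induction j with
  | zero => simp [Rr_zero]
  | succ j ih =>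
    rw [Rr_succ, ih, Nat.factorial_succ]
    push_cast
    ring

lemma Rr_zero_left (l : ℕ) : Rr 0 (l + 1) = 0 := by
  rw [Rr_succ']; ring

lemma pascal_sum (k : ℕ) (g : ℕ → ℝ) :
    ∑ l ∈ range (k + 2), ((k + 1).choose l : ℝ) * g l
      = ∑ l ∈ range (k + 1), (k.choose l : ℝ) * g l
        + ∑ l ∈ range (k + 1), (k.choose l : ℝ) * g (l + 1) := by
  have hshift : ∑ l ∈ range (k + 1), (k.choose (l + 1) : ℝ) * g (l + 1)
      = ∑ l ∈ range (k + 1), (k.choose l : ℝ) * g l - (k.choose 0 : ℝ) * g 0 := by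
    have h1 := Finset.sum_range_succ' (fun l => (k.choose l : ℝ) * g l) (k + 1)
    have h2 := Finset.sum_range_succ (fun l => (k.choose l : ℝ) * g l) (k + 1)
    simp only [Nat.choose_succ_self, Nat.cast_zero, zero_mul, add_zero] at h2
    rw [h2] at h1
    linarith [h1]
  rw [Finset.sum_range_succ' (fun l => ((k + 1).choose l : ℝ) * g l) (k + 1)]
  have : ∀ l, ((k + 1).choose (l + 1) : ℝ) = (k.choose l : ℝ) + (k.choose (l + 1) : ℝ) := by
    intro l
    rw [Nat.choose_succ_succ']
    push_cast
    ring
  simp only [this, add_mul]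
  rw [Finset.sum_add_distrib, hshift]
  simp [Nat.choose_zero_right]
  ring

lemma tri (f : ℕ → ℕ → ℝ) : ∀ n : ℕ,
    ∑ r ∈ range n, ∑ l ∈ range (r + 1), f l (r - l)
      = ∑ l ∈ range n, ∑ m ∈ range (n - l), f l m := by
  intro n
  induction n with
  | zero => simp
  | succ n ih =>
    rw [Finset.sum_range_succ, ih]
    have h1 : ∑ l ∈ range (n + 1), ∑ m ∈ range (n + 1 - l), f l m
        = ∑ l ∈ range (n + 1), (∑ m ∈ range (n - l), f l m + f l (n - l)) := by
      refine Finset.sum_congr rfl fun l hl => ?_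
      have : l ≤ n := by simpa [Nat.lt_succ_iff] using hl
      rw [show n + 1 - l = (n - l) + 1 from by omega, Finset.sum_range_succ]
    rw [h1, Finset.sum_add_distrib, Finset.sum_range_succ (fun l => ∑ m ∈ range (n - l), f l m)]
    simp

lemma vand (a b : ℝ) : ∀ j : ℕ,
    ∑ l ∈ range (j + 1), (j.choose l : ℝ) * (Rr a l * Rr b (j - l)) = Rr (a + b) j := by
  intro j
  induction j with
  | zero => simp [Rr_zero]
  | succ j ih =>
    rw [pascal_sum j (fun l => Rr a l * Rr b (j + 1 - l))]
    have e1 : ∑ l ∈ range (j + 1), (j.choose l : ℝ) * (Rr a l * Rr b (j + 1 - l))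
        = ∑ l ∈ range (j + 1), (j.choose l : ℝ) * ((Rr a l * Rr b (j - l)) * (b + (j - l : ℕ))) := by
      refine Finset.sum_congr rfl fun l hl => ?_
      have : l ≤ j := by simpa [Nat.lt_succ_iff] using hl
      rw [show j + 1 - l = (j - l) + 1 from by omega, Rr_succ]
      ring
    have e2 : ∑ l ∈ range (j + 1), (j.choose l : ℝ) * (Rr a (l + 1) * Rr b (j + 1 - (l + 1)))
        = ∑ l ∈ range (j + 1), (j.choose l : ℝ) * ((Rr a l * Rr b (j - l)) * (a + l)) := by
      refine Finset.sum_congr rfl fun l hl => ?_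
      rw [show j + 1 - (l + 1) = j - l from by omega, Rr_succ]
      ring
    rw [e1, e2, ← Finset.sum_add_distrib]
    have e3 : ∑ l ∈ range (j + 1),
        ((j.choose l : ℝ) * ((Rr a l * Rr b (j - l)) * (b + (j - l : ℕ)))
          + (j.choose l : ℝ) * ((Rr a l * Rr b (j - l)) * (a + l)))
        = ∑ l ∈ range (j + 1), (a + b + j) * ((j.choose l : ℝ) * (Rr a l * Rr b (j - l))) := by
      refine Finset.sum_congr rfl fun l hl => ?_
      have hlj : l ≤ j := by simpa [Nat.lt_succ_iff] using hl
      have : ((j - l : ℕ) : ℝ) = (j : ℝ) - l := by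
        push_cast [Nat.cast_sub hlj]; ring
      rw [this]
      ring
    rw [e3, ← Finset.mul_sum, ih, Rr_succ]
    ring

noncomputable def df (l : ℕ) : ℝ := ((2 * l - 1)‼ : ℕ)

lemma df_zero : df 0 = 1 := by simp [df, Nat.doubleFactorial]

lemma df_succ (l : ℕ) : df (l + 1) = (2 * l + 1) * df l := by
  cases l with
  | zero => simp [df, Nat.doubleFactorial]
  | succ l =>
    unfold df
    rw [show 2 * (l + 1 + 1) - 1 = (2 * l + 1) + 2 from by omega,
      Nat.doubleFactorial_add_two, show 2 * (l + 1) - 1 = 2 * l + 1 from by omega]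
    push_cast
    ring

lemma df_Rr (l : ℕ) : df l = 2 ^ l * Rr (1 / 2 : ℝ) l := by
  induction l with
  | zero => simp [df_zero, Rr_zero]
  | succ l ih =>
    rw [df_succ, ih, Rr_succ, pow_succ]
    ring

lemma id1 {l r k : ℕ} (hlr : l ≤ r) (hrk : r ≤ k) :
    k.choose l * (k - l).choose (r - l) = k.choose r * r.choose l := by
  have hpos : 0 < l ! * (r - l)! * (k - r)! :=
    Nat.mul_pos (Nat.mul_pos (Nat.factorial_pos _) (Nat.factorial_pos _)) (Nat.factorial_pos _)
  apply Nat.eq_of_mul_eq_mul_right hpos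
  have h1 := Nat.choose_mul_factorial_mul_factorial (show r - l ≤ k - l by omega)
  rw [show k - l - (r - l) = k - r from by omega] at h1
  have h2 := Nat.choose_mul_factorial_mul_factorial (hlr.trans hrk)
  have h3 := Nat.choose_mul_factorial_mul_factorial hrk
  have h4 := Nat.choose_mul_factorial_mul_factorial hlr
  calc k.choose l * (k - l).choose (r - l) * (l ! * (r - l)! * (k - r)!)
      = (k.choose l * l !) * ((k - l).choose (r - l) * (r - l)! * (k - r)!) := by ring
    _ = k.choose l * l ! * (k - l)! := by rw [h1]
    _ = k ! := h2
    _ = k.choose r * r ! * (k - r)! := h3.symm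
    _ = k.choose r * (r.choose l * l ! * (r - l)!) * (k - r)! := by rw [h4]
    _ = k.choose r * r.choose l * (l ! * (r - l)! * (k - r)!) := by ring

lemma id2 {l r k : ℕ} (hlr : l ≤ r) (hrk : r + 1 ≤ k) :
    (k - l) * (k.choose l * (k - 1 - l).choose (r - l))
      = (r + 1) * (k.choose (r + 1) * r.choose l) := by
  have hpos : 0 < l ! * (r - l)! * (k - 1 - r)! :=
    Nat.mul_pos (Nat.mul_pos (Nat.factorial_pos _) (Nat.factorial_pos _)) (Nat.factorial_pos _)
  apply Nat.eq_of_mul_eq_mul_right hpos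
  have h1 := Nat.choose_mul_factorial_mul_factorial (show r - l ≤ k - 1 - l by omega)
  rw [show k - 1 - l - (r - l) = k - 1 - r from by omega] at h1
  have h2 := Nat.choose_mul_factorial_mul_factorial (show l ≤ k by omega)
  have h3 := Nat.choose_mul_factorial_mul_factorial hrk
  rw [show k - (r + 1) = k - 1 - r from by omega] at h3
  have h4 := Nat.choose_mul_factorial_mul_factorial hlr
  have h5 : (k - l) * (k - 1 - l)! = (k - l)! := by
    rw [show k - l = (k - 1 - l) + 1 from by omega, Nat.factorial_succ]
  calc (k - l) * (k.choose l * (k - 1 - l).choose (r - l)) * (l ! * (r - l)! * (k - 1 - r)!)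
      = (k.choose l * l !) * ((k - l) * ((k - 1 - l).choose (r - l) * (r - l)! * (k - 1 - r)!)) := by
        ring
    _ = (k.choose l * l !) * ((k - l) * (k - 1 - l)!) := by rw [h1]
    _ = k.choose l * l ! * (k - l)! := by rw [h5]
    _ = k ! := h2
    _ = k.choose (r + 1) * (r + 1)! * (k - 1 - r)! := h3.symm
    _ = k.choose (r + 1) * ((r + 1) * r !) * (k - 1 - r)! := by rw [Nat.factorial_succ]
    _ = k.choose (r + 1) * ((r + 1) * (r.choose l * l ! * (r - l)!)) * (k - 1 - r)! := by rw [h4]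
    _ = (r + 1) * (k.choose (r + 1) * r.choose l) * (l ! * (r - l)! * (k - 1 - r)!) := by ring

lemma vand_df (r : ℕ) :
    ∑ l ∈ range (r + 1), (r.choose l : ℝ) * (df l * df (r - l)) = 2 ^ r * (r ! : ℝ) := by
  have hv : ∑ l ∈ range (r + 1), (r.choose l : ℝ) * (Rr (1/2) l * Rr (1/2) (r - l)) = Rr 1 r := by
    have hv0 := vand (1/2 : ℝ) (1/2 : ℝ) r
    rw [show (1/2 : ℝ) + 1/2 = 1 from by norm_num] at hv0
    exact hv0
  have e : ∑ l ∈ range (r + 1), (r.choose l : ℝ) * (df l * df (r - l))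
      = ∑ l ∈ range (r + 1), 2 ^ r * ((r.choose l : ℝ) * (Rr (1/2) l * Rr (1/2) (r - l))) := by
    refine Finset.sum_congr rfl fun l hl => ?_
    have hlr : l ≤ r := by simpa [Nat.lt_succ_iff] using hl
    rw [df_Rr, df_Rr, show (2:ℝ)^l * Rr (1/2) l * (2 ^ (r - l) * Rr (1/2) (r - l))
        = (2 ^ l * 2 ^ (r - l)) * (Rr (1/2) l * Rr (1/2) (r - l)) from by ring,
      ← pow_add, show l + (r - l) = r from by omega]
    ring
  rw [e, ← Finset.mul_sum, hv, Rr_one]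

noncomputable def cB (n k : ℕ) : ℝ :=
  ((2 * n - k - 1).factorial : ℝ) / (2 ^ (n - k) * (k - 1).factorial * (n - k).factorial)

lemma icc_range (N c : ℕ) (f : ℕ → ℝ) :
    ∑ i ∈ Finset.Icc N (N + c), f i = ∑ m ∈ range (c + 1), f (N + m) := by
  rw [← Finset.Ico_add_one_right_eq_Icc, Finset.sum_Ico_eq_sum_range,
    show N + c + 1 - N = c + 1 from by omega]

lemma pB_zero (x : ℝ) : pB 0 x = 1 := by simp [pB]

lemma pB_eq (n : ℕ) (x : ℝ) :
    pB (n + 1) x = ∑ j ∈ range (n + 1), cB (n + 1) (j + 1) * x ^ (j + 1) := by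
  rw [pB, if_neg (Nat.succ_ne_zero n)]
  rw [show Finset.Icc 1 (n + 1) = Finset.Icc 1 (1 + n) from by rw [add_comm], icc_range]
  exact Finset.sum_congr rfl fun j _ => by rw [add_comm 1 j]; rfl

lemma pB_one (x : ℝ) : pB 1 x = x := by
  rw [pB_eq]
  simp [cB, Nat.factorial]

lemma cB_diag (m : ℕ) : cB (m + 1) (m + 1) = 1 := by
  unfold cB
  rw [show 2 * (m + 1) - (m + 1) - 1 = m from by omega, Nat.sub_self,
    show (m + 1) - 1 = m from by omega]
  field_simp
  simp

lemma cBe1 (n : ℕ) : cB (n + 2) 1 = (2 * n + 1 : ℝ) * cB (n + 1) 1 := by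
  unfold cB
  rw [show 2 * (n + 2) - 1 - 1 = 2 * n + 2 from by omega,
    show (n + 2) - 1 = n + 1 from by omega,
    show 2 * (n + 1) - 1 - 1 = 2 * n from by omega,
    show (n + 1) - 1 = n from by omega, Nat.sub_self]
  have h1 : (2 * n + 2)! = (2 * n + 2) * ((2 * n + 1) * (2 * n)!) := by
    rw [show 2 * n + 2 = (2 * n + 1) + 1 from rfl, Nat.factorial_succ,
      show 2 * n + 1 = (2 * n) + 1 from rfl, Nat.factorial_succ]
  have h2 : (n + 1)! = (n + 1) * n ! := Nat.factorial_succ n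
  rw [h1, h2]
  have n1 : ((2 * n)! : ℝ) ≠ 0 := Nat.cast_ne_zero.2 (Nat.factorial_ne_zero _)
  have n2 : (n ! : ℝ) ≠ 0 := Nat.cast_ne_zero.2 (Nat.factorial_ne_zero _)
  have n3 : (2 : ℝ) ^ n ≠ 0 := pow_ne_zero _ two_ne_zero
  push_cast
  rw [pow_succ]
  field_simp

lemma cBe2 (m : ℕ) : cB (m + 3) 2 = (2 * (m + 1) + 1 : ℝ) * cB (m + 2) 2 := by
  unfold cB
  rw [show 2 * (m + 3) - 2 - 1 = 2 * m + 3 from by omega,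
    show (m + 3) - 2 = m + 1 from by omega,
    show 2 * (m + 2) - 2 - 1 = 2 * m + 1 from by omega,
    show (m + 2) - 2 = m from by omega,
    show (2 : ℕ) - 1 = 1 from rfl]
  have h1 : (2 * m + 3)! = (2 * m + 3) * ((2 * m + 2) * (2 * m + 1)!) := by
    rw [show 2 * m + 3 = (2 * m + 2) + 1 from rfl, Nat.factorial_succ,
      show 2 * m + 2 = (2 * m + 1) + 1 from rfl, Nat.factorial_succ]
  have h2 : (m + 1)! = (m + 1) * m ! := Nat.factorial_succ m
  rw [h1, h2]
  have n1 : ((2 * m + 1)! : ℝ) ≠ 0 := Nat.cast_ne_zero.2 (Nat.factorial_ne_zero _)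
  have n2 : (m ! : ℝ) ≠ 0 := Nat.cast_ne_zero.2 (Nat.factorial_ne_zero _)
  have n3 : (2 : ℝ) ^ m ≠ 0 := pow_ne_zero _ two_ne_zero
  push_cast
  rw [pow_succ]
  field_simp
  ring

lemma cid (j b : ℕ) :
    cB (j + b + 4) (j + 3)
      = (2 * (j + b + 2) + 1 : ℝ) * cB (j + b + 3) (j + 3) + cB (j + b + 2) (j + 1) := by
  unfold cB
  rw [show 2 * (j + b + 4) - (j + 3) - 1 = j + 2 * b + 4 from by omega,
    show (j + b + 4) - (j + 3) = b + 1 from by omega,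
    show (j + 3) - 1 = j + 2 from by omega,
    show 2 * (j + b + 3) - (j + 3) - 1 = j + 2 * b + 2 from by omega,
    show (j + b + 3) - (j + 3) = b from by omega,
    show 2 * (j + b + 2) - (j + 1) - 1 = j + 2 * b + 2 from by omega,
    show (j + b + 2) - (j + 1) = b + 1 from by omega,
    show (j + 1) - 1 = j from by omega]
  have h1 : (j + 2 * b + 4)! = (j + 2 * b + 4) * ((j + 2 * b + 3) * (j + 2 * b + 2)!) := by
    rw [show j + 2 * b + 4 = (j + 2 * b + 3) + 1 from rfl, Nat.factorial_succ,
      show j + 2 * b + 3 = (j + 2 * b + 2) + 1 from rfl, Nat.factorial_succ]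
  have h2 : (j + 2)! = (j + 2) * ((j + 1) * j !) := by
    rw [show j + 2 = (j + 1) + 1 from rfl, Nat.factorial_succ, Nat.factorial_succ]
  have h3 : (b + 1)! = (b + 1) * b ! := Nat.factorial_succ b
  rw [h1, h2, h3]
  have n0 : (j ! : ℝ) ≠ 0 := Nat.cast_ne_zero.2 (Nat.factorial_ne_zero _)
  have n1 : (b ! : ℝ) ≠ 0 := Nat.cast_ne_zero.2 (Nat.factorial_ne_zero _)
  have n2 : ((j + 2 * b + 2)! : ℝ) ≠ 0 := Nat.cast_ne_zero.2 (Nat.factorial_ne_zero _)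
  have n3 : (2 : ℝ) ^ b ≠ 0 := pow_ne_zero _ two_ne_zero
  push_cast
  rw [pow_succ]
  field_simp
  ring

lemma pB_rec (n : ℕ) (x : ℝ) :
    pB (n + 2) x = (2 * n + 1 : ℝ) * pB (n + 1) x + x ^ 2 * pB n x := by
  cases n with
  | zero =>
    rw [pB_zero, pB_one, pB_eq]
    rw [Finset.sum_range_succ, Finset.sum_range_succ, Finset.sum_range_zero]
    unfold cB
    norm_num [Nat.factorial]
  | succ m =>
    set n := m + 1 with hn
    rw [pB_eq, pB_eq, pB_eq]
    -- LHS : ∑ j ∈ range (n+2), cB (n+2) (j+1) * x^(j+1)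
    rw [Finset.sum_range_succ' (fun j => cB (n + 2) (j + 1) * x ^ (j + 1)) (n + 1),
      Finset.sum_range_succ' (fun j => cB (n + 2) (j + 1 + 1) * x ^ (j + 1 + 1)) n]
    rw [Finset.sum_range_succ' (fun j => cB (n + 1) (j + 1) * x ^ (j + 1)) n,
      Finset.sum_range_succ' (fun j => cB (n + 1) (j + 1 + 1) * x ^ (j + 1 + 1)) m]
    -- split top off the double-shifted sums
    rw [Finset.sum_range_succ (fun j => cB (n + 2) (j + 1 + 1 + 1) * x ^ (j + 1 + 1 + 1)) m,
      Finset.sum_range_succ (fun j => cB n (j + 1) * x ^ (j + 1)) m]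
    have hmain : ∀ j ∈ range m,
        cB (n + 2) (j + 1 + 1 + 1) * x ^ (j + 1 + 1 + 1)
          = (2 * n + 1 : ℝ) * (cB (n + 1) (j + 1 + 1 + 1) * x ^ (j + 1 + 1 + 1))
            + x ^ 2 * (cB n (j + 1) * x ^ (j + 1)) := by
      intro j hj
      have hjm : j < m := by simpa using hj
      obtain ⟨b, hb⟩ : ∃ b, m = j + b + 1 := ⟨m - j - 1, by omega⟩
      have e1 : n + 2 = j + b + 4 := by omega
      have e2 : n + 1 = j + b + 3 := by omega
      have e3 : n = j + b + 2 := by omega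
      rw [show j + 1 + 1 + 1 = j + 3 from rfl, e1, e2, e3, cid j b]
      push_cast
      ring
    rw [Finset.sum_congr rfl hmain, Finset.sum_add_distrib]
    have etop : cB (n + 2) (m + 1 + 1 + 1) * x ^ (m + 1 + 1 + 1) = cB n (m + 1) * x ^ (m + 1) * x ^ 2 := by
      rw [show m + 1 + 1 + 1 = (m + 2) + 1 from rfl, show n + 2 = (m + 2) + 1 from by omega,
        cB_diag, show n = m + 1 from hn, cB_diag]
      ring
    have e01 : cB (n + 2) (0 + 1) * x ^ (0 + 1) = (2 * n + 1 : ℝ) * (cB (n + 1) (0 + 1) * x ^ (0 + 1)) := by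
      rw [show (0:ℕ) + 1 = 1 from rfl, cBe1]
      push_cast
      ring
    have e02 : cB (n + 2) (0 + 1 + 1) * x ^ (0 + 1 + 1) = (2 * n + 1 : ℝ) * (cB (n + 1) (0 + 1 + 1) * x ^ (0 + 1 + 1)) := by
      rw [show (0:ℕ) + 1 + 1 = 2 from rfl, show n + 2 = m + 3 from by omega, show n + 1 = m + 2 from by omega, cBe2]
      rw [hn]
      push_cast
      ring
    rw [etop, e01, e02]
    simp only [mul_add, Finset.mul_sum]
    push_cast
    ring

noncomputable def QB (k : ℕ) (x : ℝ) : ℝ :=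
  ∑ l ∈ range (k + 1), (k.choose l : ℝ) * (df l * pB (k - l) x)

lemma Bmain (x : ℝ) : ∀ k, pB (k + 1) x = x * QB k x := by
  intro k
  induction k using Nat.strong_induction_on with
  | _ k IH =>
    match k with
    | 0 =>
      rw [pB_one]
      simp [QB, df_zero, pB_zero]
    | Nat.succ k =>
      have hA : ∑ l ∈ range (k + 1), (k.choose l : ℝ) * (df l * pB (k + 1 - l) x)
          = x * ∑ r ∈ range (k + 1), (k.choose r : ℝ) * (2 ^ r * (r ! : ℝ) * pB (k - r) x) := by
        have step1 : ∀ l ∈ range (k + 1), (k.choose l : ℝ) * (df l * pB (k + 1 - l) x)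
            = ∑ m ∈ range (k + 1 - l),
                x * (((k.choose l * (k - l).choose m : ℕ) : ℝ) * (df l * df m * pB (k - l - m) x)) := by
          intro l hl
          have hlk : l ≤ k := by simpa [Nat.lt_succ_iff] using hl
          rw [show k + 1 - l = (k - l) + 1 from by omega, IH (k - l) (by omega), QB]
          simp only [Finset.mul_sum]
          refine Finset.sum_congr rfl fun m hm => ?_
          push_cast
          ring
        rw [Finset.sum_congr rfl step1,
          ← tri (fun l m => x * (((k.choose l * (k - l).choose m : ℕ) : ℝ)
            * (df l * df m * pB (k - l - m) x))) (k + 1)]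
        rw [Finset.mul_sum]
        refine Finset.sum_congr rfl fun r hr => ?_
        have hrk : r ≤ k := by simpa [Nat.lt_succ_iff] using hr
        have inner : ∀ l ∈ range (r + 1),
            x * (((k.choose l * (k - l).choose (r - l) : ℕ) : ℝ)
              * (df l * df (r - l) * pB (k - l - (r - l)) x))
            = (x * ((k.choose r : ℝ) * pB (k - r) x)) * ((r.choose l : ℝ) * (df l * df (r - l))) := by
          intro l hl
          have hlr : l ≤ r := by simpa [Nat.lt_succ_iff] using hl
          rw [show k - l - (r - l) = k - r from by omega, id1 hlr hrk]
          push_cast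
          ring
        rw [Finset.sum_congr rfl inner, ← Finset.mul_sum, vand_df r]
        ring
      have hB2 : ∑ l ∈ range (k + 1), (k.choose l : ℝ) * (df (l + 1) * pB (k + 1 - (l + 1)) x)
          = ∑ l ∈ range (k + 1), (k.choose l : ℝ) * ((2 * l + 1) * df l * pB (k - l) x) := by
        refine Finset.sum_congr rfl fun l hl => ?_
        rw [Nat.add_sub_add_right, df_succ]
      have hS : x * ∑ r ∈ range k, ((k.choose (r + 1)) : ℝ)
            * (2 ^ (r + 1) * ((r + 1)! : ℝ) * pB (k - 1 - r) x)
          = ∑ l ∈ range (k + 1), (k.choose l : ℝ) * (((2 * (k - l) : ℕ) : ℝ) * df l * pB (k - l) x) := by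
        rw [Finset.sum_range_succ]
        rw [Nat.sub_self]
        simp only [Nat.mul_zero, Nat.cast_zero, zero_mul, mul_zero, add_zero]
        have step2 : ∀ l ∈ range k, (k.choose l : ℝ) * (((2 * (k - l) : ℕ) : ℝ) * df l * pB (k - l) x)
            = ∑ m ∈ range (k - l), x * (2 * ((((k - l) * (k.choose l * (k - 1 - l).choose m) : ℕ)) : ℝ)
                * (df l * df m * pB (k - 1 - l - m) x)) := by
          intro l hl
          have hlk : l < k := by simpa using hl
          rw [show k - l = (k - 1 - l) + 1 from by omega, IH (k - 1 - l) (by omega), QB]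
          rw [show (k - 1 - l) + 1 = k - l from by omega]
          simp only [Finset.mul_sum]
          refine Finset.sum_congr rfl fun m hm => ?_
          push_cast
          ring
        rw [Finset.sum_congr rfl step2,
          ← tri (fun l m => x * (2 * ((((k - l) * (k.choose l * (k - 1 - l).choose m) : ℕ)) : ℝ)
            * (df l * df m * pB (k - 1 - l - m) x))) k]
        rw [Finset.mul_sum]
        refine Finset.sum_congr rfl fun r hr => ?_
        have hrk : r + 1 ≤ k := by simpa [Nat.lt_succ_iff] using hr
        have inner : ∀ l ∈ range (r + 1),
            x * (2 * ((((k - l) * (k.choose l * (k - 1 - l).choose (r - l)) : ℕ)) : ℝ)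
              * (df l * df (r - l) * pB (k - 1 - l - (r - l)) x))
            = (x * (2 * (r + 1) * ((k.choose (r + 1)) : ℝ) * pB (k - 1 - r) x))
              * ((r.choose l : ℝ) * (df l * df (r - l))) := by
          intro l hl
          have hlr : l ≤ r := by simpa [Nat.lt_succ_iff] using hl
          rw [show k - 1 - l - (r - l) = k - 1 - r from by omega, id2 hlr hrk]
          push_cast
          ring
        rw [Finset.sum_congr rfl inner, ← Finset.mul_sum, vand_df r]
        rw [Nat.factorial_succ]
        push_cast
        ring
      -- now assemble
      have hQR : QB (k + 1) x = (2 * k + 1 : ℝ) * QB k x + x * pB k x := by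
        rw [QB, pascal_sum k (fun l => df l * pB (k + 1 - l) x), hA, hB2]
        rw [Finset.sum_range_succ' (fun r => (k.choose r : ℝ) * (2 ^ r * (r ! : ℝ) * pB (k - r) x)) k]
        simp only [Nat.choose_zero_right, Nat.cast_one, pow_zero, Nat.factorial_zero, Nat.sub_zero,
          one_mul]
        have hshift : ∀ r ∈ range k, (k.choose (r + 1) : ℝ) * (2 ^ (r + 1) * ((r + 1)! : ℝ) * pB (k - (r + 1)) x)
            = (k.choose (r + 1) : ℝ) * (2 ^ (r + 1) * ((r + 1)! : ℝ) * pB (k - 1 - r) x) := by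
          intro r hr
          rw [show k - (r + 1) = k - 1 - r from by omega]
        rw [Finset.sum_congr rfl hshift]
        rw [mul_add, hS]
        have merge : ∑ l ∈ range (k + 1), (k.choose l : ℝ) * (((2 * (k - l) : ℕ) : ℝ) * df l * pB (k - l) x)
              + ∑ l ∈ range (k + 1), (k.choose l : ℝ) * ((2 * l + 1) * df l * pB (k - l) x)
            = (2 * k + 1 : ℝ) * ∑ l ∈ range (k + 1), (k.choose l : ℝ) * (df l * pB (k - l) x) := by
          rw [← Finset.sum_add_distrib, Finset.mul_sum]
          refine Finset.sum_congr rfl fun l hl => ?_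
          have hlk : l ≤ k := by simpa [Nat.lt_succ_iff] using hl
          rw [Nat.cast_mul, Nat.cast_sub hlk]
          push_cast
          ring
        rw [QB, ← merge]
        ring
      rw [show k + 1 + 1 = k + 2 from rfl, pB_rec, hQR, IH k (by omega)]
      ring

noncomputable def SB (i k : ℕ) (x : ℝ) : ℝ :=
  ∑ l ∈ Finset.range (k + 1),
    (k.choose l : ℝ) * 2 ^ l * (descPochhammer ℝ l).eval ((i : ℝ) / 2 + l - 1) * pB (k - l) x

lemma SB_Rr (i k : ℕ) (x : ℝ) :
    SB i k x = ∑ l ∈ range (k + 1), (k.choose l : ℝ) * (2 ^ l * Rr ((i : ℝ) / 2) l * pB (k - l) x) := by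
  refine Finset.sum_congr rfl fun l hl => ?_
  rw [desc_eq_Rr]
  ring

lemma star (i k : ℕ) (x : ℝ) :
    ∑ l ∈ range (k + 1), (k.choose l : ℝ) * (2 ^ l * Rr ((i : ℝ) / 2) l * pB (k + 1 - l) x)
      = x * SB (i + 1) k x := by
  have step1 : ∀ l ∈ range (k + 1),
      (k.choose l : ℝ) * (2 ^ l * Rr ((i : ℝ) / 2) l * pB (k + 1 - l) x)
        = ∑ m ∈ range (k + 1 - l),
            x * (((k.choose l * (k - l).choose m : ℕ) : ℝ)
              * (2 ^ (l + m) * (Rr ((i : ℝ) / 2) l * Rr (1 / 2 : ℝ) m) * pB (k - l - m) x)) := by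
    intro l hl
    have hlk : l ≤ k := by simpa [Nat.lt_succ_iff] using hl
    rw [show k + 1 - l = (k - l) + 1 from by omega, Bmain x (k - l), QB]
    simp only [Finset.mul_sum]
    refine Finset.sum_congr rfl fun m hm => ?_
    rw [df_Rr m]
    push_cast
    ring
  rw [Finset.sum_congr rfl step1,
    ← tri (fun l m => x * (((k.choose l * (k - l).choose m : ℕ) : ℝ)
      * (2 ^ (l + m) * (Rr ((i : ℝ) / 2) l * Rr (1 / 2 : ℝ) m) * pB (k - l - m) x))) (k + 1)]
  rw [SB_Rr, Finset.mul_sum]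
  refine Finset.sum_congr rfl fun r hr => ?_
  have hrk : r ≤ k := by simpa [Nat.lt_succ_iff] using hr
  have inner : ∀ l ∈ range (r + 1),
      x * (((k.choose l * (k - l).choose (r - l) : ℕ) : ℝ)
        * (2 ^ (l + (r - l)) * (Rr ((i : ℝ) / 2) l * Rr (1 / 2 : ℝ) (r - l)) * pB (k - l - (r - l)) x))
      = (x * ((k.choose r : ℝ) * (2 ^ r * pB (k - r) x)))
        * ((r.choose l : ℝ) * (Rr ((i : ℝ) / 2) l * Rr (1 / 2 : ℝ) (r - l))) := by
    intro l hl
    have hlr : l ≤ r := by simpa [Nat.lt_succ_iff] using hl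
    rw [show k - l - (r - l) = k - r from by omega, show l + (r - l) = r from by omega,
      id1 hlr hrk]
    push_cast
    ring
  rw [Finset.sum_congr rfl inner, ← Finset.mul_sum, vand ((i : ℝ) / 2) (1 / 2 : ℝ) r]
  rw [show ((i : ℝ)) / 2 + 1 / 2 = ((i + 1 : ℕ) : ℝ) / 2 from by push_cast; ring]
  ring

lemma key (i k : ℕ) (x : ℝ) :
    SB i (k + 1) x = (i : ℝ) * SB (i + 2) k x + x * SB (i + 1) k x := by
  rw [SB_Rr i (k + 1) x,
    pascal_sum k (fun l => 2 ^ l * Rr ((i : ℝ) / 2) l * pB (k + 1 - l) x)]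
  have h2 : ∑ l ∈ range (k + 1),
      (k.choose l : ℝ) * (2 ^ (l + 1) * Rr ((i : ℝ) / 2) (l + 1) * pB (k + 1 - (l + 1)) x)
      = (i : ℝ) * SB (i + 2) k x := by
    rw [SB_Rr, Finset.mul_sum]
    refine Finset.sum_congr rfl fun l hl => ?_
    rw [Nat.add_sub_add_right, Rr_succ',
      show ((i : ℝ)) / 2 + 1 = ((i + 2 : ℕ) : ℝ) / 2 from by push_cast; ring, pow_succ]
    ring
  rw [star i k x, h2]
  ring

lemma base_case (k : ℕ) (x : ℝ) : pB (k + 1) x = x * SB 1 k x := by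
  rw [← star 0 k x]
  symm
  rw [Finset.sum_eq_single_of_mem 0 (Finset.mem_range.2 (Nat.succ_pos k))]
  · rw [Rr_zero]
    simp
  · intro l hl hl0
    obtain ⟨m, rfl⟩ : ∃ m, l = m + 1 := ⟨l - 1, by omega⟩
    rw [show ((0 : ℕ) : ℝ) / 2 = 0 from by norm_num, Rr_zero_left]
    ring

theorem reverse_bessel_main_identity
    (a : ℕ → ℕ → ℝ → ℝ)
    (ha0 : ∀ N : ℕ, 1 ≤ N → ∀ x : ℝ, a 0 N x = x ^ N)
    (haTop : ∀ N : ℕ, 1 ≤ N → ∀ x : ℝ,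
      a (N - 1) N x = ((2 * N - 3 : ℕ).doubleFactorial : ℝ) * x)
    (hrec0 : ∀ N : ℕ, 1 ≤ N → ∀ x : ℝ, a 0 (N + 1) x = x * a 0 N x)
    (hrecTop : ∀ N : ℕ, 1 ≤ N → ∀ x : ℝ,
      a N (N + 1) x = ((2 * N - 1 : ℕ) : ℝ) * a (N - 1) N x)
    (hrec : ∀ N : ℕ, 1 ≤ N → ∀ i : ℕ, N + 1 ≤ i → i ≤ 2 * N - 1 → ∀ x : ℝ,
      a (i - N) (N + 1) x = ((i - 1 : ℕ) : ℝ) * a (i - N - 1) N x + x * a (i - N) N x)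
    (k N : ℕ) (hN : 1 ≤ N) (x : ℝ) :
    pB (k + N) x =
      ∑ i ∈ Finset.Icc N (2 * N - 1), a (i - N) N x *
        ∑ l ∈ Finset.range (k + 1),
          (k.choose l : ℝ) * 2 ^ l * (descPochhammer ℝ l).eval ((i : ℝ) / 2 + l - 1)
            * pB (k - l) x := by
  have H : ∀ N, 1 ≤ N → ∀ k, pB (k + N) x
      = ∑ i ∈ Finset.Icc N (2 * N - 1), a (i - N) N x * SB i k x := by
    intro N hN
    induction N, hN using Nat.le_induction with
    | base =>
      intro k
      rw [show 2 * 1 - 1 = 1 from rfl, Finset.Icc_self, Finset.sum_singleton, Nat.sub_self,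
        ha0 1 le_rfl x, pow_one]
      exact base_case k x
    | succ N hN IH =>
      intro k
      obtain ⟨N', rfl⟩ : ∃ N', N = N' + 1 := ⟨N - 1, by omega⟩
      rw [show k + (N' + 1 + 1) = (k + 1) + (N' + 1) from by omega, IH (k + 1)]
      rw [show 2 * (N' + 1) - 1 = (N' + 1) + N' from by omega,
        icc_range (N' + 1) N' (fun i => a (i - (N' + 1)) (N' + 1) x * SB i (k + 1) x)]
      rw [show 2 * (N' + 1 + 1) - 1 = (N' + 2) + (N' + 1) from by omega,
        icc_range (N' + 2) (N' + 1) (fun i => a (i - (N' + 2)) (N' + 2) x * SB i k x)]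
      simp only [Nat.add_sub_cancel_left]
      -- expand the left side with key
      have expand : ∀ m ∈ range (N' + 1),
          a m (N' + 1) x * SB (N' + 1 + m) (k + 1) x
            = a m (N' + 1) x * (((N' + 1 + m : ℕ) : ℝ) * SB (N' + 1 + m + 2) k x)
              + a m (N' + 1) x * (x * SB (N' + 1 + m + 1) k x) := by
        intro m hm
        rw [key (N' + 1 + m) k x]
        ring
      rw [Finset.sum_congr rfl expand, Finset.sum_add_distrib]
      rw [Finset.sum_range_succ (fun m => a m (N' + 1) x
        * (((N' + 1 + m : ℕ) : ℝ) * SB (N' + 1 + m + 2) k x)) N']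
      rw [Finset.sum_range_succ' (fun m => a m (N' + 1) x * (x * SB (N' + 1 + m + 1) k x)) N']
      -- expand the right side
      rw [Finset.sum_range_succ' (fun m => a m (N' + 2) x * SB (N' + 2 + m) k x) (N' + 1)]
      rw [Finset.sum_range_succ (fun m => a (m + 1) (N' + 2) x * SB (N' + 2 + (m + 1)) k x) N']
      -- bottom terms
      have hbot : a 0 (N' + 2) x * SB (N' + 2 + 0) k x
          = a 0 (N' + 1) x * (x * SB (N' + 1 + 0 + 1) k x) := by
        rw [hrec0 (N' + 1) (by omega) x]
        rw [show N' + 2 + 0 = N' + 1 + 0 + 1 from by omega]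
        ring
      -- top terms
      have htop : a (N' + 1) (N' + 2) x * SB (N' + 2 + (N' + 1)) k x
          = a N' (N' + 1) x * (((N' + 1 + N' : ℕ) : ℝ) * SB (N' + 1 + N' + 2) k x) := by
        have ht := hrecTop (N' + 1) (by omega) x
        rw [show (N' + 1) - 1 = N' from by omega, show 2 * (N' + 1) - 1 = N' + 1 + N' from by omega]
          at ht
        rw [show N' + 2 + (N' + 1) = N' + 1 + N' + 2 from by omega, ht]
        ring
      -- middle terms
      have hmid : ∀ m ∈ range N',
          a (m + 1) (N' + 2) x * SB (N' + 2 + (m + 1)) k x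
            = a m (N' + 1) x * (((N' + 1 + m : ℕ) : ℝ) * SB (N' + 1 + m + 2) k x)
              + a (m + 1) (N' + 1) x * (x * SB (N' + 1 + (m + 1) + 1) k x) := by
        intro m hm
        have hmN : m < N' := by simpa using hm
        have hr := hrec (N' + 1) (by omega) (m + 1 + (N' + 1)) (by omega) (by omega) x
        rw [show m + 1 + (N' + 1) - (N' + 1) = m + 1 from by omega] at hr
        rw [show m + 1 - 1 = m from by omega] at hr
        rw [show m + 1 + (N' + 1) - 1 = N' + 1 + m from by omega] at hr
        rw [show N' + 2 + (m + 1) = N' + 1 + m + 2 from by omega, hr,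
          show N' + 1 + (m + 1) + 1 = N' + 1 + m + 2 from by omega]
        ring
      rw [Finset.sum_congr rfl hmid, Finset.sum_add_distrib, hbot, htop]
      ring
  have h := H N hN k
  rw [h]
  rfl
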